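/- For every positive integer n, α(n,n) ≤ 4 + a(3,n). -/

import Mathlib

/-- The Ackermann function: `A 1 j = 2^j`, `A (i+1) 1 = A i 2`,
`A (i+1) (j+1) = A i (A (i+1) j)` for `i, j ≥ 1`. Values at `i = 0` or `j = 0`
are irrelevant (set to `0`). -/
def ackFn : ℕ → ℕ → ℕ
  | 0, _ => 0
  | 1, j => 2 ^ j
  | _ + 2, 0 => 0
  | i + 2, 1 => ackFn (i + 1) 2
  | i + 2, j + 2 => ackFn (i + 1) (ackFn (i + 2) (j + 1))
termination_by i j => (i, j)

/-- Row inverse of the Ackermann function: `a(i,n) = min {j ≥ 1 : A(i,j) > ⌊log₂ n⌋}`. -/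
noncomputable def ackRowInv (i n : ℕ) : ℕ :=
  sInf {j : ℕ | 1 ≤ j ∧ Nat.log 2 n < ackFn i j}

/-- Inverse Ackermann function: `α(m,n) = min {i ≥ 1 : A(i,⌊m/n⌋) > ⌊log₂ n⌋}`. -/
noncomputable def ackAlpha (m n : ℕ) : ℕ :=
  sInf {i : ℕ | 1 ≤ i ∧ Nat.log 2 n < ackFn i (m / n)}

lemma ackFn_one (j : ℕ) : ackFn 1 j = 2 ^ j := by rw [ackFn]

lemma ackFn_succ_one (i : ℕ) : ackFn (i + 2) 1 = ackFn (i + 1) 2 := by rw [ackFn]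

lemma ackFn_succ_succ (i j : ℕ) :
    ackFn (i + 2) (j + 2) = ackFn (i + 1) (ackFn (i + 2) (j + 1)) := by rw [ackFn]

lemma ackFn_lb : ∀ i j, 2 ^ (j + 1) ≤ ackFn (i + 1) (j + 1) := by
  intro i
  induction i with
  | zero => intro j; rw [ackFn_one]
  | succ i ih =>
    intro j
    induction j with
    | zero =>
      rw [show i + 1 + 1 = i + 2 from rfl, ackFn_succ_one]
      calc 2 ^ 1 ≤ 2 ^ 2 := by norm_num
        _ ≤ ackFn (i + 1) 2 := ih 1
    | succ j ihj =>
      rw [show i + 1 + 1 = i + 2 from rfl, ackFn_succ_succ]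
      have hm : 2 ^ (j + 1) ≤ ackFn (i + 2) (j + 1) := ihj
      have hm1 : j + 2 ≤ ackFn (i + 2) (j + 1) :=
        le_trans (by have := Nat.lt_two_pow_self (n := j + 1); omega) hm
      obtain ⟨m, hm2⟩ : ∃ m, ackFn (i + 2) (j + 1) = m + 1 :=
        ⟨ackFn (i + 2) (j + 1) - 1, by omega⟩
      rw [hm2]
      calc 2 ^ (j + 2) ≤ 2 ^ (m + 1) := Nat.pow_le_pow_right (by norm_num) (by omega)
        _ ≤ ackFn (i + 1) (m + 1) := ih m

lemma ackFn_lt_succ (i j : ℕ) : ackFn (i + 1) (j + 1) < ackFn (i + 1) (j + 2) := by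
  cases i with
  | zero => rw [ackFn_one, ackFn_one]; exact Nat.pow_lt_pow_right (by norm_num) (by omega)
  | succ i =>
    rw [show i + 1 + 1 = i + 2 from rfl, ackFn_succ_succ]
    have hm : 2 ^ (j + 1) ≤ ackFn (i + 2) (j + 1) := ackFn_lb (i + 1) j
    have hpow : 0 < 2 ^ (j + 1) := Nat.pow_pos (by norm_num)
    obtain ⟨m, hm2⟩ : ∃ m, ackFn (i + 2) (j + 1) = m + 1 :=
      ⟨ackFn (i + 2) (j + 1) - 1, by omega⟩
    rw [hm2]
    calc m + 1 < 2 ^ (m + 1) := Nat.lt_two_pow_self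
      _ ≤ ackFn (i + 1) (m + 1) := ackFn_lb i m

lemma ackFn_mono2 (i : ℕ) {j k : ℕ} (h : j ≤ k) :
    ackFn (i + 1) (j + 1) ≤ ackFn (i + 1) (k + 1) := by
  induction k with
  | zero =>
    have : j = 0 := by omega
    subst this; rfl
  | succ k ih =>
    rcases Nat.lt_or_ge j (k + 1) with h' | h'
    · exact le_trans (ih (by omega)) (le_of_lt (ackFn_lt_succ i k))
    · have : j = k + 1 := by omega
      subst this; rfl

lemma ackFn_mono1 (i j : ℕ) : ackFn (i + 1) (j + 1) ≤ ackFn (i + 2) (j + 1) := by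
  cases j with
  | zero =>
    rw [ackFn_succ_one]
    exact ackFn_mono2 i (by omega)
  | succ j =>
    rw [ackFn_succ_succ]
    have hm : 2 ^ (j + 1) ≤ ackFn (i + 2) (j + 1) := ackFn_lb (i + 1) j
    have h2 : j + 2 ≤ ackFn (i + 2) (j + 1) :=
      le_trans (by have := Nat.lt_two_pow_self (n := j + 1); omega) hm
    obtain ⟨m, hm2⟩ : ∃ m, ackFn (i + 2) (j + 1) = m + 1 :=
      ⟨ackFn (i + 2) (j + 1) - 1, by omega⟩
    rw [hm2]
    exact ackFn_mono2 i (by omega)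

lemma ackFn_mono1' (i d j : ℕ) : ackFn (i + 1) (j + 1) ≤ ackFn (i + 1 + d) (j + 1) := by
  induction d with
  | zero => rfl
  | succ d ih =>
    exact le_trans ih (by rw [show i + 1 + (d + 1) = (i + d) + 2 from by ring,
      show i + 1 + d = (i + d) + 1 from by ring]; exact ackFn_mono1 (i + d) j)

lemma ackFn_key : ∀ k, ackFn 3 (k + 1) ≤ ackFn (k + 4) 1 := by
  intro k
  induction k with
  | zero =>
    show ackFn 3 1 ≤ ackFn 4 1
    have e : ackFn 4 1 = ackFn 3 2 := ackFn_succ_one 2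
    rw [e]
    exact ackFn_mono2 2 (by omega : (0:ℕ) ≤ 1)
  | succ k ih =>
    have hm : 2 ^ (k + 1) ≤ ackFn 3 (k + 1) := ackFn_lb 2 k
    have hpow : 0 < 2 ^ (k + 1) := Nat.pow_pos (by norm_num)
    obtain ⟨p, hp⟩ : ∃ p, ackFn 3 (k + 1) = p + 1 := ⟨ackFn 3 (k + 1) - 1, by omega⟩
    obtain ⟨m, hm2⟩ : ∃ m, ackFn (k + 4) 1 = m + 1 := ⟨ackFn (k + 4) 1 - 1, by omega⟩
    have hpm : p ≤ m := by omega
    have h1 : ackFn 3 (k + 2) ≤ ackFn 2 (m + 1) := by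
      rw [show (3 : ℕ) = 1 + 2 from rfl, ackFn_succ_succ, show (1 : ℕ) + 1 = 2 from rfl, hp]
      exact ackFn_mono2 1 hpm
    have h2 : ackFn 2 (m + 1) ≤ ackFn (k + 3) (m + 1) := by
      have := ackFn_mono1' 1 (k + 1) m
      rwa [show 1 + 1 + (k + 1) = k + 3 from by ring] at this
    have e1 : ackFn (k + 5) 1 = ackFn (k + 4) 2 := by
      rw [show k + 5 = k + 3 + 2 from by ring, ackFn_succ_one,
        show k + 3 + 1 = k + 4 from by ring]
    have e2 : ackFn (k + 4) 2 = ackFn (k + 3) (ackFn (k + 4) 1) := by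
      rw [show k + 4 = k + 2 + 2 from by ring, show (2 : ℕ) = 0 + 2 from rfl,
        ackFn_succ_succ, show k + 2 + 1 = k + 3 from by ring,
        show (0 : ℕ) + 1 = 1 from rfl, show k + 2 + 2 = k + 4 from by ring]
    show ackFn 3 (k + 2) ≤ ackFn (k + 5) 1
    rw [e1, e2, hm2]
    exact le_trans h1 h2

/-- For every positive integer `n`, `α(n,n) ≤ 4 + a(3,n)`. -/
theorem ackAlpha_diag_le (n : ℕ) (hn : 1 ≤ n) :
    ackAlpha n n ≤ 4 + ackRowInv 3 n := by
  set L := Nat.log 2 n with hL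
  have hne : {j : ℕ | 1 ≤ j ∧ L < ackFn 3 j}.Nonempty := by
    refine ⟨L + 1, by omega, ?_⟩
    calc L < 2 ^ (L + 1) := by have := Nat.lt_two_pow_self (n := L); calc L < 2 ^ L := this
                                 _ ≤ 2 ^ (L + 1) := Nat.pow_le_pow_right (by norm_num) (by omega)
      _ ≤ ackFn 3 (L + 1) := ackFn_lb 2 L
  have hj := Nat.sInf_mem hne
  set j := sInf {j : ℕ | 1 ≤ j ∧ L < ackFn 3 j} with hjdef
  obtain ⟨hj1, hj2⟩ := hj
  have hRI : ackRowInv 3 n = j := rfl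
  have hdiv : n / n = 1 := Nat.div_self hn
  have hmain : L < ackFn (4 + j) 1 := by
    obtain ⟨k, hk⟩ : ∃ k, j = k + 1 := ⟨j - 1, by omega⟩
    have h1 : ackFn 3 j ≤ ackFn (j + 3) 1 := by rw [hk]; exact ackFn_key k
    have h2 : ackFn (j + 3) 1 ≤ ackFn (j + 4) 1 := by
      rw [show j + 3 = (j + 2) + 1 from rfl, show j + 4 = (j + 2) + 2 from rfl]
      exact ackFn_mono1 (j + 2) 0
    rw [show 4 + j = j + 4 from by ring]
    omega
  have : 4 + j ∈ {i : ℕ | 1 ≤ i ∧ L < ackFn i (n / n)} := by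
    refine ⟨by omega, ?_⟩
    rw [hdiv]; exact hmain
  calc ackAlpha n n ≤ 4 + j := Nat.sInf_le this
    _ = 4 + ackRowInv 3 n := by rw [hRI]
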